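/- Let G be a group and H a subgroup of G. Then H is fully invariant in G (i.e., H.map φ ≤ H for every group homomorphism φ : G →* G) if and only if there exist a functor F : Grp ⥤ Grp and a natural transformation ι : F ⟶ 𝟭 Grp such that H equals the range of the underlying group homomorphism of the component ι.app G : F.obj G ⟶ G. -/

import Mathlib

open CategoryTheory

/-- The union of images of `H` under all homs `G →* K`. -/
def fiSub (G : GrpCat) (H : Subgroup G) (K : GrpCat) : Subgroup K :=
  ⨆ f : G →* K, H.map f

lemma fiSub_map_le (G : GrpCat) (H : Subgroup G) {K L : GrpCat} (g : K →* L) :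
    (fiSub G H K).map g ≤ fiSub G H L := by
  rw [fiSub, Subgroup.map_iSup]
  exact iSup_le fun f => by
    rw [Subgroup.map_map]
    exact le_iSup (fun f : G →* L => H.map f) (g.comp f)

def fiFunctor (G : GrpCat) (H : Subgroup G) : GrpCat ⥤ GrpCat where
  obj K := GrpCat.of (fiSub G H K)
  map {K L} g := GrpCat.ofHom <|
    ((g.hom : K →* L).comp (fiSub G H K).subtype).codRestrict (fiSub G H L)
      (fun x => fiSub_map_le G H g.hom ⟨x, x.2, rfl⟩)
  map_id K := by ext x; rfl
  map_comp f g := by ext x; rfl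

def fiTrans (G : GrpCat) (H : Subgroup G) : fiFunctor G H ⟶ 𝟭 GrpCat where
  app K := GrpCat.ofHom (X := fiSub G H K) (Y := K) (fiSub G H K).subtype
  naturality K L g := by ext x; rfl

theorem fullyInvariant_iff_counit (G : GrpCat) (H : Subgroup G) :
    (∀ φ : G →* G, H.map φ ≤ H) ↔
      ∃ (F : GrpCat ⥤ GrpCat) (ι : F ⟶ 𝟭 GrpCat),
        H = MonoidHom.range (ι.app G).hom := by
  constructor
  · intro h
    refine ⟨fiFunctor G H, fiTrans G H, ?_⟩
    have hA : fiSub G H G = H := by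
      apply le_antisymm (iSup_le fun f => h f)
      simpa using le_iSup (fun f : G →* G => H.map f) (MonoidHom.id G)
    have : MonoidHom.range ((fiTrans G H).app G).hom = fiSub G H G :=
      Subgroup.range_subtype (fiSub G H G)
    rw [this, hA]
  · rintro ⟨F, ι, rfl⟩ φ
    rintro x ⟨y, ⟨z, rfl⟩, rfl⟩
    exact ⟨F.map (GrpCat.ofHom φ) z,
      by
        have := ConcreteCategory.congr_hom (ι.naturality (GrpCat.ofHom φ)) z
        rw [CategoryTheory.comp_apply, CategoryTheory.comp_apply] at this
        exact this⟩
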